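/- Fix n ≥ 3 and let K_n be the complete graph on the vertex set V = {1,…,n}, and let H be the finite set of all spanning trees of K_n. Let D be a probability distribution on nonnegative edge-cost vectors c : Sym2 V → ℝ≥0, and for T ∈ H define the error η(T,c) = c(T) − min_{T' ∈ H} c(T'), where c(T) = ∑_{e ∈ E(T)} c(e). Suppose there is η_max > 0 such that η(T,c) ≤ η_max for every T ∈ H and D-almost every c. Let ε, δ ∈ (0,1) and let m be an integer with m ≥ 2·ln(2|H|/δ)·η_max²/ε². Let C_1,…,C_m be independent random cost vectors each with law D, and let T_p be any measurable random element of H that minimizes the empirical error (1/m)·∑_{i=1}^{m} η(T, C_i) over T ∈ H. Then with probability at least 1 − δ, E_{c∼D}[η(T_p, c)] ≤ min_{T ∈ H} E_{c∼D}[η(T, c)] + ε. -/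

import Mathlib

open MeasureTheory ProbabilityTheory

section HoeffdingAux

/-- Core analytic inequality for Hoeffding's lemma. -/
lemma hoeffding_key_aux {p : ℝ} (hp0 : 0 ≤ p) (hp1 : p ≤ 1) (h : ℝ) :
    (1 - p) * Real.exp (-p * h) + p * Real.exp ((1 - p) * h) ≤ Real.exp (h ^ 2 / 8) := by
  have hD : ∀ x : ℝ, 0 < 1 - p + p * Real.exp x := by
    intro x
    rcases lt_or_eq_of_le hp1 with h1 | h1
    · have := mul_nonneg hp0 (Real.exp_pos x).le
      linarith
    · subst h1; simpa using Real.exp_pos x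
  set φ : ℝ → ℝ := fun x => p * x + x ^ 2 / 8 - Real.log (1 - p + p * Real.exp x) with hφdef
  have hD' : ∀ x : ℝ, HasDerivAt (fun y => 1 - p + p * Real.exp y) (p * Real.exp x) x := by
    intro x
    exact ((Real.hasDerivAt_exp x).const_mul p).const_add (1 - p)
  set φ' : ℝ → ℝ := fun x => p + x / 4 - p * Real.exp x / (1 - p + p * Real.exp x) with hφ'def
  have hφd : ∀ x : ℝ, HasDerivAt φ (φ' x) x := by
    intro x
    have h1 : HasDerivAt (fun y : ℝ => p * y + y ^ 2 / 8) (p + x / 4) x := by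
      have := ((hasDerivAt_id x).const_mul p).add ((hasDerivAt_pow 2 x).div_const 8)
      exact this.congr_deriv (by norm_num; ring)
    have h2 : HasDerivAt (fun y => Real.log (1 - p + p * Real.exp y))
        (p * Real.exp x / (1 - p + p * Real.exp x)) x := (hD' x).log (hD x).ne'
    exact h1.sub h2
  have hφ'd : ∀ x : ℝ, HasDerivAt φ'
      (1 / 4 - (p * Real.exp x * (1 - p + p * Real.exp x) - p * Real.exp x * (p * Real.exp x)) /
        (1 - p + p * Real.exp x) ^ 2) x := by
    intro x
    have h1 : HasDerivAt (fun y : ℝ => p + y / 4) (1 / 4) x := by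
      simpa using ((hasDerivAt_id x).div_const 4).const_add p
    have h2 : HasDerivAt (fun y => p * Real.exp y / (1 - p + p * Real.exp y))
        ((p * Real.exp x * (1 - p + p * Real.exp x) - p * Real.exp x * (p * Real.exp x)) /
          (1 - p + p * Real.exp x) ^ 2) x := by
      exact ((Real.hasDerivAt_exp x).const_mul p).div (hD' x) (hD x).ne'
    exact h1.sub h2
  have hφ'mono : Monotone φ' := by
    apply monotone_of_deriv_nonneg (fun x => (hφ'd x).differentiableAt)
    intro x
    rw [(hφ'd x).deriv]
    have hd2 : (0:ℝ) < (1 - p + p * Real.exp x) ^ 2 := pow_pos (hD x) 2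
    rw [sub_nonneg, div_le_iff₀ hd2]
    nlinarith [sq_nonneg ((1 - p) - p * Real.exp x), Real.exp_pos x]
  have hφ'0 : φ' 0 = 0 := by
    simp only [hφ'def, Real.exp_zero, mul_one]
    have : 1 - p + p = 1 := by ring
    rw [this]; simp
  have hφ0 : φ 0 = 0 := by
    simp only [hφdef, Real.exp_zero, mul_one, mul_zero]
    have : 1 - p + p = 1 := by ring
    rw [this]; simp
  have hφnonneg : ∀ x : ℝ, 0 ≤ φ x := by
    intro x
    rcases le_total 0 x with hx | hx
    · have hmono : MonotoneOn φ (Set.Ici 0) := by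
        apply monotoneOn_of_deriv_nonneg (convex_Ici 0)
          (Continuous.continuousOn (by
            have : Differentiable ℝ φ := fun y => (hφd y).differentiableAt
            exact this.continuous))
          (fun y _ => (hφd y).differentiableAt.differentiableWithinAt)
        intro y hy
        rw [(hφd y).deriv]
        have : (0:ℝ) ≤ y := le_of_lt (by simpa using hy)
        calc (0:ℝ) = φ' 0 := hφ'0.symm
          _ ≤ φ' y := hφ'mono this
      have := hmono (Set.self_mem_Ici) hx hx
      linarith [hφ0 ▸ this]
    · have hanti : AntitoneOn φ (Set.Iic 0) := by
        apply antitoneOn_of_deriv_nonpos (convex_Iic 0)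
          (Continuous.continuousOn (by
            have : Differentiable ℝ φ := fun y => (hφd y).differentiableAt
            exact this.continuous))
          (fun y _ => (hφd y).differentiableAt.differentiableWithinAt)
        intro y hy
        rw [(hφd y).deriv]
        have : y ≤ (0:ℝ) := le_of_lt (by simpa using hy)
        calc φ' y ≤ φ' 0 := hφ'mono this
          _ = 0 := hφ'0
      have := hanti hx Set.self_mem_Iic hx
      linarith [hφ0 ▸ this]
  -- conclude
  have key : Real.log (1 - p + p * Real.exp h) ≤ p * h + h ^ 2 / 8 := by
    have := hφnonneg h
    simp only [hφdef] at this
    linarith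
  have lhs_eq : (1 - p) * Real.exp (-p * h) + p * Real.exp ((1 - p) * h)
      = Real.exp (-p * h) * (1 - p + p * Real.exp h) := by
    rw [show (1 - p) * h = -p * h + h by ring, Real.exp_add]; ring
  rw [lhs_eq, ← Real.exp_log (hD h), ← Real.exp_add]
  apply Real.exp_le_exp.2
  linarith
variable {Ω' : Type*} [MeasurableSpace Ω'] {μ : Measure Ω'} [IsProbabilityMeasure μ]

lemma integrable_exp_mul_of_bounded_aux {Y : Ω' → ℝ} (hY : Measurable Y) {a b t : ℝ}
    (hbd : ∀ᵐ ω ∂μ, Y ω ∈ Set.Icc a b) :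
    Integrable (fun ω => Real.exp (t * Y ω)) μ := by
  apply Integrable.mono' (integrable_const (Real.exp (max (t * a) (t * b))))
    ((hY.const_mul t).exp.aestronglyMeasurable)
  filter_upwards [hbd] with ω hω
  rw [Real.norm_eq_abs, abs_of_pos (Real.exp_pos _)]
  apply Real.exp_le_exp.2
  rcases le_total 0 t with ht | ht
  · exact le_max_of_le_right (mul_le_mul_of_nonneg_left hω.2 ht)
  · exact le_max_of_le_left (mul_le_mul_of_nonpos_left hω.1 ht)
/-- Hoeffding's lemma. -/
lemma hoeffding_mgf_aux {Y : Ω' → ℝ} (hY : Measurable Y) {a b : ℝ} (t : ℝ)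
    (ha : a ≤ 0) (hb : 0 ≤ b) (hab : a < b)
    (hbd : ∀ᵐ ω ∂μ, Y ω ∈ Set.Icc a b) (hmean : ∫ ω, Y ω ∂μ = 0) :
    mgf Y μ t ≤ Real.exp (t ^ 2 * (b - a) ^ 2 / 8) := by
  have hba : (0:ℝ) < b - a := sub_pos.2 hab
  have hYint : Integrable Y μ := by
    apply Integrable.mono' (integrable_const (max (-a) b)) hY.aestronglyMeasurable
    filter_upwards [hbd] with ω hω
    rw [Real.norm_eq_abs, abs_le]
    constructor
    · linarith [le_max_left (-a) b, hω.1]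
    · linarith [le_max_right (-a) b, hω.2]
  set c1 : ℝ := b * Real.exp (t * a) / (b - a) - a * Real.exp (t * b) / (b - a) with hc1
  set c2 : ℝ := (Real.exp (t * b) - Real.exp (t * a)) / (b - a) with hc2
  have chord : ∀ᵐ ω ∂μ, Real.exp (t * Y ω) ≤ c1 + c2 * Y ω := by
    filter_upwards [hbd] with ω hω
    have hw1 : (0:ℝ) ≤ (b - Y ω) / (b - a) := div_nonneg (by linarith [hω.2]) hba.le
    have hw2 : (0:ℝ) ≤ (Y ω - a) / (b - a) := div_nonneg (by linarith [hω.1]) hba.le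
    have hsum : (b - Y ω) / (b - a) + (Y ω - a) / (b - a) = 1 := by
      field_simp
      ring
    have hcvx := convexOn_exp.2 (Set.mem_univ (t * a)) (Set.mem_univ (t * b)) hw1 hw2 hsum
    simp only [smul_eq_mul] at hcvx
    have hpt : (b - Y ω) / (b - a) * (t * a) + (Y ω - a) / (b - a) * (t * b) = t * Y ω := by
      field_simp
      ring
    rw [hpt] at hcvx
    calc Real.exp (t * Y ω)
        ≤ (b - Y ω) / (b - a) * Real.exp (t * a) + (Y ω - a) / (b - a) * Real.exp (t * b) := hcvx
      _ = c1 + c2 * Y ω := by rw [hc1, hc2]; field_simp; ring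
  have hint1 : Integrable (fun ω => c1 + c2 * Y ω) μ :=
    (integrable_const c1).add (hYint.const_mul c2)
  have hmgf : mgf Y μ t ≤ c1 := by
    have := integral_mono_ae (integrable_exp_mul_of_bounded_aux hY hbd) hint1 chord
    rw [mgf]
    calc ∫ ω, Real.exp (t * Y ω) ∂μ ≤ ∫ ω, (c1 + c2 * Y ω) ∂μ := this
      _ = c1 + c2 * ∫ ω, Y ω ∂μ := by
          rw [integral_add (integrable_const c1) (hYint.const_mul c2), integral_const,
            integral_const_mul, probReal_univ]
          simp
      _ = c1 := by rw [hmean]; ring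
  set p : ℝ := -a / (b - a) with hp
  have hp0 : 0 ≤ p := div_nonneg (by linarith) hba.le
  have hp1 : p ≤ 1 := by rw [hp, div_le_one hba]; linarith
  have e1 : -p * (t * (b - a)) = t * a := by
    rw [hp]; field_simp
  have e2 : (1 - p) * (t * (b - a)) = t * b := by
    rw [hp]; field_simp; ring
  have hc1eq : c1 = (1 - p) * Real.exp (-p * (t * (b - a))) + p * Real.exp ((1 - p) * (t * (b - a))) := by
    rw [hc1, e1, e2, hp]
    field_simp
    ring
  calc mgf Y μ t ≤ c1 := hmgf
    _ ≤ Real.exp ((t * (b - a)) ^ 2 / 8) := by rw [hc1eq]; exact hoeffding_key_aux hp0 hp1 _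
    _ = Real.exp (t ^ 2 * (b - a) ^ 2 / 8) := by rw [mul_pow]
/-- One-sided Hoeffding tail bound for sums of independent bounded centered variables. -/
lemma hoeffding_tail_aux {m : ℕ} (hm : 0 < m) {Y : Fin m → Ω' → ℝ}
    (hmeas : ∀ i, Measurable (Y i))
    (hind : iIndepFun Y μ)
    {a b : ℝ} (ha : a ≤ 0) (hb : 0 ≤ b) (hab : a < b)
    (hbd : ∀ i, ∀ᵐ ω ∂μ, Y i ω ∈ Set.Icc a b)
    (hmean : ∀ i, ∫ ω, Y i ω ∂μ = 0)
    {s : ℝ} (hs : 0 < s) :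
    (μ {ω | s ≤ ∑ i, Y i ω}).toReal ≤ Real.exp (-2 * s ^ 2 / (m * (b - a) ^ 2)) := by
  have hba : (0:ℝ) < b - a := sub_pos.2 hab
  have hmR : (0:ℝ) < (m:ℝ) := Nat.cast_pos.2 hm
  set t : ℝ := 4 * s / ((m:ℝ) * (b - a) ^ 2) with ht
  have htpos : 0 < t := by positivity
  have hint : ∀ i, Integrable (fun ω => Real.exp (t * Y i ω)) μ := fun i =>
    integrable_exp_mul_of_bounded_aux (hmeas i) (hbd i)
  have hset : {ω | s ≤ ∑ i, Y i ω} = {ω | s ≤ (∑ i, Y i) ω} := by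
    ext ω; simp [Finset.sum_apply]
  have hsum_int : Integrable (fun ω => Real.exp (t * (∑ i, Y i) ω)) μ :=
    hind.integrable_exp_mul_sum hmeas (fun i _ => hint i)
  have h1 := measure_ge_le_exp_mul_mgf (X := ∑ i, Y i) (μ := μ) s htpos.le hsum_int
  rw [hset]
  have hmgf : mgf (∑ i, Y i) μ t ≤ Real.exp ((m:ℝ) * (t ^ 2 * (b - a) ^ 2 / 8)) := by
    rw [hind.mgf_sum hmeas]
    calc ∏ i, mgf (Y i) μ t
        ≤ ∏ _i : Fin m, Real.exp (t ^ 2 * (b - a) ^ 2 / 8) := by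
          apply Finset.prod_le_prod (fun i _ => mgf_nonneg)
          exact fun i _ => hoeffding_mgf_aux (hmeas i) t ha hb hab (hbd i) (hmean i)
      _ = Real.exp ((m:ℝ) * (t ^ 2 * (b - a) ^ 2 / 8)) := by
          rw [Finset.prod_const, ← Real.exp_nat_mul]
          simp
  calc (μ {ω | s ≤ (∑ i, Y i) ω}).toReal
      ≤ Real.exp (-t * s) * mgf (∑ i, Y i) μ t := h1
    _ ≤ Real.exp (-t * s) * Real.exp ((m:ℝ) * (t ^ 2 * (b - a) ^ 2 / 8)) := by
        exact mul_le_mul_of_nonneg_left hmgf (Real.exp_pos _).le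
    _ = Real.exp (-2 * s ^ 2 / ((m:ℝ) * (b - a) ^ 2)) := by
        rw [← Real.exp_add]
        congr 1
        rw [ht]
        field_simp
        ring
end HoeffdingAux

/-- The cost of a spanning tree `T` with respect to an edge-cost vector `c`. -/
noncomputable def treeCost {n : ℕ} (c : Sym2 (Fin n) → ℝ) (T : SimpleGraph (Fin n)) : ℝ :=
  ∑ᶠ e ∈ T.edgeSet, c e

/-- The error of a spanning tree `T` with respect to an edge-cost vector `c`: the excess of
its cost over the minimum spanning tree cost (trees of the complete graph on `Fin n` are
exactly the trees on `Fin n`). -/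
noncomputable def treeErr (n : ℕ) (T : SimpleGraph (Fin n)) (c : Sym2 (Fin n) → ℝ) : ℝ :=
  treeCost c T - ⨅ T' : {T' : SimpleGraph (Fin n) // T'.IsTree}, treeCost c T'.1

/-- **PAC learnability of tree predictions.** Empirical risk minimization over the finite
class `H` of all spanning trees of `K_n`, using `m ≥ 2 ln(2|H|/δ) η_max² / ε²` i.i.d. samples
from `D`, returns with probability at least `1 − δ` a tree whose expected error is within `ε`
of the best expected error. -/
theorem stmt_7 (n : ℕ) (hn : 3 ≤ n)
    (D : Measure (Sym2 (Fin n) → ℝ)) [IsProbabilityMeasure D]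
    (hpos : ∀ᵐ c ∂D, ∀ e : Sym2 (Fin n), 0 ≤ c e)
    (ηmax : ℝ) (hηmax : 0 < ηmax)
    (hbound : ∀ᵐ c ∂D, ∀ T : SimpleGraph (Fin n), T.IsTree → treeErr n T c ≤ ηmax)
    (ε δ : ℝ) (hε : ε ∈ Set.Ioo (0 : ℝ) 1) (hδ : δ ∈ Set.Ioo (0 : ℝ) 1)
    (m : ℕ)
    (hm : 2 * Real.log (2 * (Nat.card {T : SimpleGraph (Fin n) // T.IsTree} : ℝ) / δ) *
        ηmax ^ 2 / ε ^ 2 ≤ (m : ℝ))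
    (Ω : Type*) [MeasurableSpace Ω] (P : Measure Ω) [IsProbabilityMeasure P]
    (X : Fin m → Ω → (Sym2 (Fin n) → ℝ))
    (hX_meas : ∀ i, Measurable (X i))
    (hX_indep : iIndepFun X P)
    (hX_law : ∀ i, Measure.map (X i) P = D)
    (Tp : Ω → SimpleGraph (Fin n))
    (hTp_meas : @Measurable Ω (SimpleGraph (Fin n)) _ ⊤ Tp)
    (hTp_tree : ∀ ω, (Tp ω).IsTree)
    (hTp_min : ∀ ω, ∀ T : SimpleGraph (Fin n), T.IsTree →
      (1 / (m : ℝ)) * ∑ i : Fin m, treeErr n (Tp ω) (X i ω) ≤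
        (1 / (m : ℝ)) * ∑ i : Fin m, treeErr n T (X i ω)) :
    ENNReal.ofReal (1 - δ) ≤
      P {ω | ∫ c, treeErr n (Tp ω) c ∂D ≤
        (⨅ T : {T : SimpleGraph (Fin n) // T.IsTree}, ∫ c, treeErr n T.1 c ∂D) + ε} := by
  classical
  obtain ⟨hε0, hε1⟩ := hε
  obtain ⟨hδ0, hδ1⟩ := hδ
  haveI hΩne : Nonempty Ω := by
    by_contra h
    rw [not_nonempty_iff] at h
    have h1 : (P Set.univ) = 1 := measure_univ
    rw [Set.univ_eq_empty_iff.mpr h, measure_empty] at h1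
    exact zero_ne_one h1
  haveI : Nonempty {T : SimpleGraph (Fin n) // T.IsTree} :=
    ⟨⟨Tp (Classical.arbitrary Ω), hTp_tree _⟩⟩
  haveI : Finite {T : SimpleGraph (Fin n) // T.IsTree} := Subtype.finite
  haveI : Fintype {T : SimpleGraph (Fin n) // T.IsTree} := Fintype.ofFinite _
  set N : ℝ := (Nat.card {T : SimpleGraph (Fin n) // T.IsTree} : ℝ) with hNdef
  have hN1 : (1:ℝ) ≤ N := by
    have h : 0 < Nat.card {T : SimpleGraph (Fin n) // T.IsTree} := Nat.card_pos
    rw [hNdef]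
    exact_mod_cast Nat.one_le_iff_ne_zero.mpr h.ne'
  -- measurability
  have measCost : ∀ T : SimpleGraph (Fin n),
      Measurable (fun c : Sym2 (Fin n) → ℝ => treeCost c T) := by
    intro T
    have h : (fun c : Sym2 (Fin n) → ℝ => treeCost c T)
        = fun c => ∑ e ∈ (Set.toFinite T.edgeSet).toFinset, c e := by
      funext c
      rw [treeCost, ← finsum_mem_coe_finset, Set.Finite.coe_toFinset]
    rw [h]
    exact Finset.measurable_sum _ (fun e _ => measurable_pi_apply e)
  have measErr : ∀ T : SimpleGraph (Fin n), Measurable (treeErr n T) := by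
    intro T
    exact (measCost T).sub (Measurable.iInf (fun T' => measCost T'.1))
  -- nonnegativity of errors
  have errNonneg : ∀ (T : SimpleGraph (Fin n)), T.IsTree →
      ∀ c : Sym2 (Fin n) → ℝ, 0 ≤ treeErr n T c := by
    intro T hT c
    rw [treeErr, sub_nonneg]
    exact ciInf_le (Set.Finite.bddBelow (Set.finite_range
      (fun T' : {T' : SimpleGraph (Fin n) // T'.IsTree} => treeCost c T'.1))) ⟨T, hT⟩
  -- true risks
  set L : {T : SimpleGraph (Fin n) // T.IsTree} → ℝ :=
    fun T => ∫ c, treeErr n T.1 c ∂D with hLdef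
  have hDbd : ∀ᵐ c ∂D, ∀ T : {T : SimpleGraph (Fin n) // T.IsTree},
      treeErr n T.1 c ∈ Set.Icc (0:ℝ) ηmax := by
    filter_upwards [hbound] with c hc T
    exact ⟨errNonneg T.1 T.2 c, hc T.1 T.2⟩
  have hL0 : ∀ T, 0 ≤ L T := fun T => integral_nonneg (fun c => errNonneg T.1 T.2 c)
  have hDint : ∀ T : {T : SimpleGraph (Fin n) // T.IsTree},
      Integrable (fun c => treeErr n T.1 c) D := by
    intro T
    apply Integrable.mono' (integrable_const ηmax) (measErr T.1).aestronglyMeasurable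
    filter_upwards [hDbd] with c hc
    rw [Real.norm_eq_abs, abs_of_nonneg (hc T).1]
    exact (hc T).2
  have hLmax : ∀ T, L T ≤ ηmax := by
    intro T
    have h := integral_mono_ae (hDint T) (integrable_const ηmax)
      (by filter_upwards [hDbd] with c hc; exact (hc T).2)
    simpa using h
  -- m is positive
  have hlogpos : 0 < Real.log (2 * N / δ) := by
    apply Real.log_pos
    rw [lt_div_iff₀ hδ0]
    linarith
  have hmR : (0:ℝ) < (m:ℝ) := by
    calc (0:ℝ) < 2 * Real.log (2 * N / δ) * ηmax ^ 2 / ε ^ 2 := by positivity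
      _ ≤ (m:ℝ) := hm
  have hm0 : 0 < m := by exact_mod_cast hmR
  -- transfer to P
  have hbd' : ∀ i, ∀ᵐ ω ∂P, ∀ T : {T : SimpleGraph (Fin n) // T.IsTree},
      treeErr n T.1 (X i ω) ∈ Set.Icc (0:ℝ) ηmax := by
    intro i
    have h := hDbd
    rw [← hX_law i] at h
    exact ae_of_ae_map (hX_meas i).aemeasurable h
  have hXint : ∀ (i : Fin m) (T : {T : SimpleGraph (Fin n) // T.IsTree}),
      ∫ ω, treeErr n T.1 (X i ω) ∂P = L T := by
    intro i T
    have h := integral_map (μ := P) (hX_meas i).aemeasurable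
      (f := fun c => treeErr n T.1 c)
      ((measErr T.1).aestronglyMeasurable)
    rw [hX_law i] at h
    exact h.symm
  have hPint : ∀ (i : Fin m) (T : {T : SimpleGraph (Fin n) // T.IsTree}),
      Integrable (fun ω => treeErr n T.1 (X i ω)) P := by
    intro i T
    apply Integrable.mono' (integrable_const ηmax)
      (((measErr T.1).comp (hX_meas i)).aestronglyMeasurable)
    filter_upwards [hbd' i] with ω hω
    simp only [Function.comp_apply]
    rw [Real.norm_eq_abs, abs_of_nonneg (hω T).1]
    exact (hω T).2
  -- centered variables
  set s : ℝ := (m:ℝ) * ε / 2 with hsdef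
  have hs : 0 < s := by positivity
  set E : ℝ := Real.exp (-2 * s ^ 2 / ((m:ℝ) * ηmax ^ 2)) with hEdef
  have hYmeas : ∀ (T : {T : SimpleGraph (Fin n) // T.IsTree}) (i : Fin m),
      Measurable (fun ω => treeErr n T.1 (X i ω) - L T) :=
    fun T i => ((measErr T.1).comp (hX_meas i)).sub measurable_const
  have hYmean : ∀ (T : {T : SimpleGraph (Fin n) // T.IsTree}) (i : Fin m),
      ∫ ω, (treeErr n T.1 (X i ω) - L T) ∂P = 0 := by
    intro T i
    rw [integral_sub (hPint i T) (integrable_const _), hXint i T, integral_const, probReal_univ]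
    simp
  -- tail bounds
  have tail1 : ∀ T : {T : SimpleGraph (Fin n) // T.IsTree},
      (P {ω | s ≤ ∑ i, (treeErr n T.1 (X i ω) - L T)}).toReal ≤ E := by
    intro T
    have hind : iIndepFun
        (fun i ω => treeErr n T.1 (X i ω) - L T) P :=
      hX_indep.comp (fun i c => treeErr n T.1 c - L T)
        (fun i => (measErr T.1).sub measurable_const)
    have h := hoeffding_tail_aux (μ := P)
      (Y := fun i ω => treeErr n T.1 (X i ω) - L T) hm0 (hYmeas T) hind
      (a := -L T) (b := ηmax - L T)
      (neg_nonpos.2 (hL0 T)) (by linarith [hLmax T]) (by linarith [hL0 T, hηmax])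
      (fun i => by
        filter_upwards [hbd' i] with ω hω
        exact ⟨by linarith [(hω T).1], by linarith [(hω T).2]⟩)
      (hYmean T) hs
    rw [show ηmax - L T - -L T = ηmax by ring] at h
    exact h
  have tail2 : ∀ T : {T : SimpleGraph (Fin n) // T.IsTree},
      (P {ω | s ≤ -∑ i, (treeErr n T.1 (X i ω) - L T)}).toReal ≤ E := by
    intro T
    have hind : iIndepFun
        (fun i ω => L T - treeErr n T.1 (X i ω)) P :=
      hX_indep.comp (fun i c => L T - treeErr n T.1 c)
        (fun i => measurable_const.sub (measErr T.1))
    have h := hoeffding_tail_aux (μ := P)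
      (Y := fun i ω => L T - treeErr n T.1 (X i ω)) hm0
      (fun i => measurable_const.sub ((measErr T.1).comp (hX_meas i))) hind
      (a := L T - ηmax) (b := L T)
      (by linarith [hLmax T]) (hL0 T) (by linarith [hηmax])
      (fun i => by
        filter_upwards [hbd' i] with ω hω
        exact ⟨by linarith [(hω T).2], by linarith [(hω T).1]⟩)
      (fun i => by
        have h1 := hYmean T i
        have h2 : ∀ ω, L T - treeErr n T.1 (X i ω) = -(treeErr n T.1 (X i ω) - L T) := by
          intro ω; ring
        simp only [h2]
        rw [integral_neg, h1, neg_zero])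
      hs
    rw [show L T - (L T - ηmax) = ηmax by ring] at h
    have hseteq : {ω | s ≤ ∑ i, (L T - treeErr n T.1 (X i ω))}
        = {ω | s ≤ -∑ i, (treeErr n T.1 (X i ω) - L T)} := by
      ext ω
      simp only [Set.mem_setOf_eq, ← Finset.sum_neg_distrib, neg_sub]
    rw [hseteq] at h
    exact h
  -- the bad event
  set bad : {T : SimpleGraph (Fin n) // T.IsTree} → Set Ω :=
    fun T => {ω | s ≤ ∑ i, (treeErr n T.1 (X i ω) - L T)}
      ∪ {ω | s ≤ -∑ i, (treeErr n T.1 (X i ω) - L T)} with hbaddef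
  have hSmeas : ∀ T : {T : SimpleGraph (Fin n) // T.IsTree},
      Measurable (fun ω => ∑ i, (treeErr n T.1 (X i ω) - L T)) :=
    fun T => Finset.measurable_sum _ (fun i _ => hYmeas T i)
  have hbadmeas : ∀ T, MeasurableSet (bad T) := by
    intro T
    apply MeasurableSet.union
    · exact measurableSet_le measurable_const (hSmeas T)
    · exact measurableSet_le measurable_const (hSmeas T).neg
  have hbadP : ∀ T, P (bad T) ≤ ENNReal.ofReal (2 * E) := by
    intro T
    calc P (bad T) ≤ P {ω | s ≤ ∑ i, (treeErr n T.1 (X i ω) - L T)}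
        + P {ω | s ≤ -∑ i, (treeErr n T.1 (X i ω) - L T)} := measure_union_le _ _
      _ ≤ ENNReal.ofReal E + ENNReal.ofReal E := by
          gcongr
          · exact (ENNReal.le_ofReal_iff_toReal_le (measure_ne_top P _)
              (Real.exp_pos _).le).mpr (tail1 T)
          · exact (ENNReal.le_ofReal_iff_toReal_le (measure_ne_top P _)
              (Real.exp_pos _).le).mpr (tail2 T)
      _ = ENNReal.ofReal (2 * E) := by
          rw [two_mul, ENNReal.ofReal_add (Real.exp_pos _).le (Real.exp_pos _).le]
  -- union bound and numerics
  have hnum : N * (2 * E) ≤ δ := by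
    have hexp : -2 * s ^ 2 / ((m:ℝ) * ηmax ^ 2) ≤ -Real.log (2 * N / δ) := by
      rw [show -2 * s ^ 2 / ((m:ℝ) * ηmax ^ 2)
          = -(2 * s ^ 2 / ((m:ℝ) * ηmax ^ 2)) by ring, neg_le_neg_iff]
      have h1 : 2 * Real.log (2 * N / δ) * ηmax ^ 2 ≤ (m:ℝ) * ε ^ 2 := by
        have h := hm
        rw [div_le_iff₀ (by positivity : (0:ℝ) < ε ^ 2)] at h
        linarith
      rw [le_div_iff₀ (by positivity : (0:ℝ) < (m:ℝ) * ηmax ^ 2)]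
      have h2 : 2 * s ^ 2 = (m:ℝ) * ((m:ℝ) * ε ^ 2) / 2 := by
        rw [hsdef]; ring
      nlinarith [mul_le_mul_of_nonneg_left h1 hmR.le]
    have hE2 : E ≤ δ / (2 * N) := by
      rw [hEdef]
      calc Real.exp (-2 * s ^ 2 / ((m:ℝ) * ηmax ^ 2))
          ≤ Real.exp (-Real.log (2 * N / δ)) := Real.exp_le_exp.2 hexp
        _ = δ / (2 * N) := by
            rw [Real.exp_neg, Real.exp_log (by positivity)]
            rw [inv_div]
    calc N * (2 * E) ≤ N * (2 * (δ / (2 * N))) := by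
          apply mul_le_mul_of_nonneg_left _ (by linarith)
          linarith
      _ = δ := by
          field_simp
  have hGbad : P (⋃ T, bad T) ≤ ENNReal.ofReal δ := by
    calc P (⋃ T, bad T) ≤ ∑' T, P (bad T) := measure_iUnion_le _
      _ ≤ ∑' T : {T : SimpleGraph (Fin n) // T.IsTree}, ENNReal.ofReal (2 * E) :=
          ENNReal.tsum_le_tsum (fun T => hbadP T)
      _ = ∑ T : {T : SimpleGraph (Fin n) // T.IsTree}, ENNReal.ofReal (2 * E) := tsum_fintype _
      _ = (Fintype.card {T : SimpleGraph (Fin n) // T.IsTree}) * ENNReal.ofReal (2 * E) := by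
          rw [Finset.sum_const, Finset.card_univ, nsmul_eq_mul]
      _ = ENNReal.ofReal (N * (2 * E)) := by
          rw [← ENNReal.ofReal_natCast (Fintype.card {T : SimpleGraph (Fin n) // T.IsTree}),
            ← ENNReal.ofReal_mul (by positivity)]
          congr 2
          rw [hNdef, Nat.card_eq_fintype_card]
      _ ≤ ENNReal.ofReal δ := ENNReal.ofReal_le_ofReal hnum
  -- the good event implies the conclusion
  have hsubset : (⋃ T, bad T)ᶜ ⊆ {ω | ∫ c, treeErr n (Tp ω) c ∂D ≤
      (⨅ T : {T : SimpleGraph (Fin n) // T.IsTree}, ∫ c, treeErr n T.1 c ∂D) + ε} := by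
    intro ω hω
    simp only [Set.mem_compl_iff, Set.mem_iUnion, not_exists] at hω
    have hgood : ∀ T : {T : SimpleGraph (Fin n) // T.IsTree},
        |∑ i, (treeErr n T.1 (X i ω) - L T)| < s := by
      intro T
      have h := hω T
      rw [hbaddef] at h
      simp only [Set.mem_union, Set.mem_setOf_eq, not_or, not_le] at h
      rw [abs_lt]
      exact ⟨by linarith [h.2], h.1⟩
    have hSexp : ∀ T : {T : SimpleGraph (Fin n) // T.IsTree},
        ∑ i, (treeErr n T.1 (X i ω) - L T)
          = (∑ i, treeErr n T.1 (X i ω)) - (m:ℝ) * L T := by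
      intro T
      rw [Finset.sum_sub_distrib, Finset.sum_const, Finset.card_univ, Fintype.card_fin,
        nsmul_eq_mul]
    simp only [Set.mem_setOf_eq]
    set Tpω : {T : SimpleGraph (Fin n) // T.IsTree} := ⟨Tp ω, hTp_tree ω⟩ with hTpω
    have key : ∀ T : {T : SimpleGraph (Fin n) // T.IsTree}, L Tpω ≤ L T + ε := by
      intro T
      have h1 := hgood Tpω
      have h2 := hgood T
      rw [hSexp Tpω, abs_lt] at h1
      rw [hSexp T, abs_lt] at h2
      have hsum : ∑ i, treeErr n (Tp ω) (X i ω) ≤ ∑ i, treeErr n T.1 (X i ω) := by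
        have h := hTp_min ω T.1 T.2
        have hinv : (0:ℝ) < 1 / (m:ℝ) := by positivity
        exact le_of_mul_le_mul_left h hinv
      have hTsum : (∑ i, treeErr n Tpω.1 (X i ω)) = ∑ i, treeErr n (Tp ω) (X i ω) := rfl
      rw [hTsum] at h1
      have hmain : (m:ℝ) * L Tpω < (m:ℝ) * (L T + ε) := by
        have hεm : (m:ℝ) * ε = 2 * s := by rw [hsdef]; ring
        nlinarith [h1.1, h1.2, h2.1, h2.2, hsum]
      have := (mul_lt_mul_iff_right₀ hmR).mp hmain
      linarith
    have hfin : L Tpω - ε ≤ ⨅ T : {T : SimpleGraph (Fin n) // T.IsTree}, L T :=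
      le_ciInf (fun T => by linarith [key T])
    have hLTp : ∫ c, treeErr n (Tp ω) c ∂D = L Tpω := rfl
    rw [hLTp]
    have hIeq : (⨅ T : {T : SimpleGraph (Fin n) // T.IsTree}, ∫ c, treeErr n T.1 c ∂D)
        = ⨅ T : {T : SimpleGraph (Fin n) // T.IsTree}, L T := rfl
    rw [hIeq]
    linarith
  -- conclusion
  have hGmeas : MeasurableSet (⋃ T, bad T) := MeasurableSet.iUnion (fun T => hbadmeas T)
  calc ENNReal.ofReal (1 - δ) = 1 - ENNReal.ofReal δ := by
        rw [ENNReal.ofReal_sub _ hδ0.le, ENNReal.ofReal_one]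
    _ ≤ 1 - P (⋃ T, bad T) := tsub_le_tsub_left hGbad 1
    _ = P ((⋃ T, bad T)ᶜ) := (prob_compl_eq_one_sub hGmeas).symm
    _ ≤ P {ω | ∫ c, treeErr n (Tp ω) c ∂D ≤
        (⨅ T : {T : SimpleGraph (Fin n) // T.IsTree}, ∫ c, treeErr n T.1 c ∂D) + ε} :=
        measure_mono hsubset
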